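/- Planner-aware ELBO for P2-style planners: let V, D and the P2 planner G_2 = {G^k_2}_{k=1}^L be as below, let p^{G_2}(x_0) be the probability that P2 planner-guided sampling produces x_0 (a sequence with no masks), and let r^{G_2}_k(·; x_0) be the step-k law of the reference chain Y^{x_0}. Then log p^{G_2}(x_0) ≥ 𝓔_1(x_0) + 𝓔_2(x_0), where 𝓔_1(x_0) = Σ_{k=0}^{L-1} E_{x_k ~ r^{G_2}_k(·;x_0)}[ Σ_{y ∈ 𝓧_{L-k-1}(x_0)} Cat( C(y); G^{k+1}_2(x_0, x_k) ) · Σ_{i ∈ C(y)} log Cat( x_0^i; D^i(x_k) ) ] and 𝓔_2(x_0) = − Σ_{k=0}^{L-1} E_{x_k ~ r^{G_2}_k(·;x_0)}[ Σ_{y ∈ 𝓧_{L-k-1}(x_0)} Cat( C(y); G^{k+1}_2(x_0, x_k) ) · log( Cat( C(y); G^{k+1}_2(x_0, x_k) ) / F^{k+1}(x_k, y) ) ], with F^{k+1}(x, y) = E_{z ~ D(x)}[ Cat( C(y); G^{k+1}_2(z^{-y}, x) ) ]. -/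

import Mathlib

open Finset

/-- `C(y)`: the set of unmasked coordinates of `y`. -/
def unmaskedSet {V : Type*} [Fintype V] [DecidableEq V] {L : ℕ}
    (mask : V) (y : Fin L → V) : Finset (Fin L) :=
  Finset.univ.filter (fun i : Fin L => y i ≠ mask)

/-- The sequence keeping the coordinates of `z` on `S` and masking all others. -/
def maskedWith {V : Type*} {L : ℕ}
    (mask : V) (z : Fin L → V) (S : Finset (Fin L)) : Fin L → V :=
  fun i => if i ∈ S then z i else mask

/-- `z^{-y}`: the sequence `z` with `z^i` replaced by `y^i` for every `i ∈ C(y)`. -/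
def mergeOn {V : Type*} [DecidableEq V] {L : ℕ}
    (mask : V) (z y : Fin L → V) : Fin L → V :=
  fun i => if y i ≠ mask then y i else z i

/-- `N_M(x)`: the number of masked coordinates of `x`. -/
def NMask {V : Type*} [Fintype V] [DecidableEq V] {L : ℕ}
    (mask : V) (x : Fin L → V) : ℕ :=
  (Finset.univ.filter (fun i : Fin L => x i = mask)).card

/-- `𝓧_j(x₀)`: the set of sequences equal to `x₀` except that exactly `j` coordinates
are replaced by the mask symbol. -/
def XSet {V : Type*} [Fintype V] [DecidableEq V] {L : ℕ}
    (mask : V) (x0 : Fin L → V) (j : ℕ) : Finset (Fin L → V) :=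
  Finset.univ.filter (fun x : Fin L → V =>
    (∀ i, x i = x0 i ∨ x i = mask) ∧ NMask mask x = j)

/-- `F^{k}(x, y) = E_{z ~ D(x)}[ Cat(C(y); G₂^{k}(z^{-y}, x)) ]`. -/
noncomputable def FP2 {V : Type*} [Fintype V] [DecidableEq V] {L : ℕ}
    (D : (Fin L → V) → Fin L → V → ℝ)
    (G2 : ℕ → (Fin L → V) → (Fin L → V) → Finset (Fin L) → ℝ)
    (mask : V) (k : ℕ) (x y : Fin L → V) : ℝ :=
  ∑ z : Fin L → V, (∏ j, D x j (z j)) * G2 k (mergeOn mask z y) x (unmaskedSet mask y)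

/-- One step of P2 planner-guided sampling after step `k`. -/
noncomputable def p2Kernel {V : Type*} [Fintype V] [DecidableEq V] {L : ℕ}
    (D : (Fin L → V) → Fin L → V → ℝ)
    (G2 : ℕ → (Fin L → V) → (Fin L → V) → Finset (Fin L) → ℝ)
    (mask : V) (k : ℕ) (x w : Fin L → V) : ℝ :=
  ∑ z : Fin L → V, (∏ j, D x j (z j)) *
    ∑ S ∈ Finset.univ.filter (fun S : Finset (Fin L) => maskedWith mask z S = w),
      G2 (k + 1) z x S

/-- The distribution of the state after `k` steps of P2 planner-guided sampling,
starting from the fully masked sequence; `p2Dist D G2 mask L` is `p^{G₂}`. -/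
noncomputable def p2Dist {V : Type*} [Fintype V] [DecidableEq V] {L : ℕ}
    (D : (Fin L → V) → Fin L → V → ℝ)
    (G2 : ℕ → (Fin L → V) → (Fin L → V) → Finset (Fin L) → ℝ)
    (mask : V) : ℕ → (Fin L → V) → ℝ
  | 0, w => if w = (fun _ => mask) then (1 : ℝ) else 0
  | k + 1, w => ∑ x : Fin L → V, p2Dist D G2 mask k x * p2Kernel D G2 mask k x w

/-- The step-`k` law `r^{G₂}_k(·; x₀)` of the reference chain `Y^{x₀}`: starting from
the fully masked sequence, at step `k` it moves to `y ∈ 𝓧_{L-k-1}(x₀)` with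
probability `Cat(C(y); G₂^{k+1}(x₀, Y_k))`. -/
noncomputable def refDistP2 {V : Type*} [Fintype V] [DecidableEq V] {L : ℕ}
    (G2 : ℕ → (Fin L → V) → (Fin L → V) → Finset (Fin L) → ℝ)
    (mask : V) (x0 : Fin L → V) : ℕ → (Fin L → V) → ℝ
  | 0, w => if w = (fun _ => mask) then (1 : ℝ) else 0
  | k + 1, w =>
      if w ∈ XSet mask x0 (L - (k + 1)) then
        ∑ x : Fin L → V, refDistP2 G2 mask x0 k x * G2 (k + 1) x0 x (unmaskedSet mask w)
      else 0


lemma logsum_aux {ι : Type*} [DecidableEq ι] (t : Finset ι) (q a : ι → ℝ)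
    (hq0 : ∀ i ∈ t, 0 ≤ q i) (hq1 : ∑ i ∈ t, q i = 1)
    (ha0 : ∀ i ∈ t, 0 ≤ a i) (hap : ∀ i ∈ t, 0 < q i → 0 < a i) :
    ∑ i ∈ t, q i * (Real.log (a i) - Real.log (q i)) ≤ Real.log (∑ i ∈ t, a i) := by
  classical
  set t' := t.filter (fun i => 0 < q i) with ht'
  have hsub : t' ⊆ t := Finset.filter_subset _ _
  have hqzero : ∀ i ∈ t, i ∉ t' → q i = 0 := by
    intro i hi hni
    by_contra h
    exact hni (Finset.mem_filter.mpr ⟨hi, lt_of_le_of_ne (hq0 i hi) (Ne.symm h)⟩)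
  have hq1' : ∑ i ∈ t', q i = 1 := by
    rw [Finset.sum_subset hsub hqzero]; exact hq1
  have hne : t'.Nonempty := by
    rcases Finset.eq_empty_or_nonempty t' with h | h
    · rw [h, Finset.sum_empty] at hq1'; norm_num at hq1'
    · exact h
  have haP : ∀ i ∈ t', 0 < a i := fun i hi =>
    hap i (hsub hi) (Finset.mem_filter.mp hi).2
  set S := ∑ i ∈ t', a i with hS
  have hSpos : 0 < S := Finset.sum_pos haP hne
  have hstep : ∀ i ∈ t',
      q i * (Real.log (a i) - Real.log (q i)) ≤ a i / S - q i + q i * Real.log S := by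
    intro i hi
    have hqi : 0 < q i := (Finset.mem_filter.mp hi).2
    have hai : 0 < a i := haP i hi
    have h1 : Real.log (a i / (q i * S)) ≤ a i / (q i * S) - 1 :=
      Real.log_le_sub_one_of_pos (by positivity)
    have h2 : Real.log (a i / (q i * S)) = Real.log (a i) - Real.log (q i) - Real.log S := by
      rw [Real.log_div hai.ne' (by positivity), Real.log_mul hqi.ne' hSpos.ne']; ring
    have h3 : Real.log (a i) - Real.log (q i) ≤ a i / (q i * S) - 1 + Real.log S := by
      linarith
    have h4 := mul_le_mul_of_nonneg_left h3 hqi.le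
    have h5 : q i * (a i / (q i * S) - 1 + Real.log S)
        = a i / S - q i + q i * Real.log S := by
      field_simp
    linarith
  calc ∑ i ∈ t, q i * (Real.log (a i) - Real.log (q i))
      = ∑ i ∈ t', q i * (Real.log (a i) - Real.log (q i)) := by
        rw [Finset.sum_subset hsub]
        intro i hi hni; rw [hqzero i hi hni]; ring
    _ ≤ ∑ i ∈ t', (a i / S - q i + q i * Real.log S) := Finset.sum_le_sum hstep
    _ = S / S - 1 + Real.log S := by
        rw [Finset.sum_add_distrib, Finset.sum_sub_distrib, ← Finset.sum_div,
          ← Finset.sum_mul, hq1', ← hS]; ring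
    _ = Real.log S := by rw [div_self hSpos.ne']; ring
    _ ≤ Real.log (∑ i ∈ t, a i) := by
        apply Real.log_le_log hSpos
        exact Finset.sum_le_sum_of_subset_of_nonneg hsub (fun i hi _ => ha0 i hi)

section AuxP2
set_option linter.unusedSectionVars false
variable {V : Type*} [Fintype V] [DecidableEq V] {L : ℕ}

variable {mask : V} {x0 : Fin L → V}

lemma mem_unmaskedSet {y : Fin L → V} {i : Fin L} :
    i ∈ unmaskedSet mask y ↔ y i ≠ mask := by
  simp [unmaskedSet]

lemma XSet_val {j : ℕ} {w : Fin L → V}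
    (hw : w ∈ XSet mask x0 j) {i : Fin L} (hi : i ∈ unmaskedSet mask w) :
    w i = x0 i := by
  rw [mem_unmaskedSet] at hi
  rcases (Finset.mem_filter.mp hw).2.1 i with h | h
  · exact h
  · exact absurd h hi

lemma card_unmaskedSet {j : ℕ} {w : Fin L → V}
    (hw : w ∈ XSet mask x0 j) : (unmaskedSet mask w).card = L - j := by
  have h2 : (NMask mask w) = j := (Finset.mem_filter.mp hw).2.2
  have key := Finset.card_filter_add_card_filter_not
    (s := (Finset.univ : Finset (Fin L))) (p := fun i => w i = mask)
  have hcard : (Finset.univ : Finset (Fin L)).card = L := by simp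
  unfold unmaskedSet
  unfold NMask at h2
  simp only [ne_eq]
  omega

lemma XSet_le {j : ℕ} {w : Fin L → V}
    (hw : w ∈ XSet mask x0 j) : j ≤ L := by
  have h2 : (NMask mask w) = j := (Finset.mem_filter.mp hw).2.2
  unfold NMask at h2
  have := Finset.card_filter_le (Finset.univ : Finset (Fin L)) (fun i => w i = mask)
  simpa [h2] using this

lemma maskedWith_mem_XSet (hx0 : ∀ i, x0 i ≠ mask) {j : ℕ} (hj : j ≤ L)
    {S : Finset (Fin L)} (hS : S.card = L - j) :
    maskedWith mask x0 S ∈ XSet mask x0 j := by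
  refine Finset.mem_filter.mpr ⟨Finset.mem_univ _, ?_, ?_⟩
  · intro i; unfold maskedWith; split <;> simp
  · unfold NMask maskedWith
    have : (Finset.univ.filter fun i : Fin L =>
        (if i ∈ S then x0 i else mask) = mask) = Sᶜ := by
      ext i
      by_cases h : i ∈ S <;> simp [h, hx0 i]
    rw [this, Finset.card_compl, hS]
    simp
    omega

lemma unmaskedSet_maskedWith (hx0 : ∀ i, x0 i ≠ mask) (S : Finset (Fin L)) :
    unmaskedSet mask (maskedWith mask x0 S) = S := by
  ext i
  by_cases h : i ∈ S <;> simp [mem_unmaskedSet, maskedWith, h, hx0 i]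

lemma maskedWith_unmaskedSet {j : ℕ} {w : Fin L → V}
    (hw : w ∈ XSet mask x0 j) :
    maskedWith mask x0 (unmaskedSet mask w) = w := by
  funext i
  unfold maskedWith
  by_cases h : i ∈ unmaskedSet mask w
  · rw [if_pos h]
    exact (XSet_val hw h).symm
  · rw [if_neg h]
    rw [mem_unmaskedSet, not_not] at h
    exact h.symm

lemma sum_XSet (hx0 : ∀ i, x0 i ≠ mask) {j : ℕ} (hj : j ≤ L) (f : Finset (Fin L) → ℝ) :
    ∑ w ∈ XSet mask x0 j, f (unmaskedSet mask w)
      = ∑ S ∈ Finset.univ.filter (fun S : Finset (Fin L) => S.card = L - j), f S := by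
  apply Finset.sum_bij' (i := fun w _ => unmaskedSet mask w)
    (j := fun S _ => maskedWith mask x0 S)
  · intro w hw
    exact Finset.mem_filter.mpr ⟨Finset.mem_univ _, card_unmaskedSet hw⟩
  · intro S hS
    exact maskedWith_mem_XSet hx0 hj (Finset.mem_filter.mp hS).2
  · intro w hw; exact maskedWith_unmaskedSet hw
  · intro S hS; exact unmaskedSet_maskedWith hx0 S
  · intro w hw; rfl

lemma sum_G2_XSet {G2 : ℕ → (Fin L → V) → (Fin L → V) → Finset (Fin L) → ℝ}
    (hG2card : ∀ k z x S, G2 k z x S ≠ 0 → S.card = k)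
    (hG2sum : ∀ k z x, 1 ≤ k → k ≤ L → ∑ S : Finset (Fin L), G2 k z x S = 1)
    (hx0 : ∀ i, x0 i ≠ mask) {n : ℕ} (hn : n < L) (x : Fin L → V) :
    ∑ w ∈ XSet mask x0 (L - n - 1), G2 (n + 1) x0 x (unmaskedSet mask w) = 1 := by
  rw [sum_XSet hx0 (by omega) (fun S => G2 (n + 1) x0 x S)]
  have hcard : L - (L - n - 1) = n + 1 := by omega
  rw [← hG2sum (n + 1) x0 x (by omega) (by omega)]
  symm
  apply (Finset.sum_subset (Finset.filter_subset _ _) ?_).symm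
  intro S _ hS
  by_contra h
  exact hS (Finset.mem_filter.mpr ⟨Finset.mem_univ _, by rw [hG2card _ _ _ _ h, hcard]⟩)

lemma fp2_split (D : (Fin L → V) → Fin L → V → ℝ)
    (hD1 : ∀ x i, ∑ y, D x i y = 1)
    (G2 : ℕ → (Fin L → V) → (Fin L → V) → Finset (Fin L) → ℝ)
    (mask : V) (k : ℕ) (x w : Fin L → V) :
    (∏ i ∈ unmaskedSet mask w, D x i (w i)) * FP2 D G2 mask k x w
      = ∑ z ∈ Finset.univ.filter
          (fun z : Fin L → V => ∀ i ∈ unmaskedSet mask w, z i = w i),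
          (∏ j, D x j (z j)) * G2 k z x (unmaskedSet mask w) := by
  classical
  have hmemP : ∀ i, i ∈ unmaskedSet mask w ↔ w i ≠ mask := fun i => mem_unmaskedSet
  let P : Fin L → Prop := fun i => w i ≠ mask
  let e := Equiv.piEquivPiSubtypeProd P (fun _ => V)
  let Mb : (∀ _i : {i // ¬ P i}, V) → (Fin L → V) :=
    fun b i => if h : P i then w i else b ⟨i, h⟩
  let aw : (∀ _i : {i // P i}, V) := fun i => w i.1
  have hsymm : ∀ (a : ∀ _i : {i // P i}, V) (b : ∀ _i : {i // ¬ P i}, V) (i : Fin L),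
      e.symm (a, b) i = if h : P i then a ⟨i, h⟩ else b ⟨i, h⟩ := by
    intro a b i
    simp [e, Equiv.piEquivPiSubtypeProd]
  have hprod : ∀ z : Fin L → V,
      (∏ j, D x j (z j)) = (∏ i : {i // P i}, D x (i : Fin L) (z i)) *
        ∏ i : {i // ¬ P i}, D x (i : Fin L) (z i) :=
    fun z => (Fintype.prod_subtype_mul_prod_subtype P fun i => D x i (z i)).symm
  have hmerge : ∀ (a : ∀ _i : {i // P i}, V) (b : ∀ _i : {i // ¬ P i}, V),
      mergeOn mask (e.symm (a, b)) w = Mb b := by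
    intro a b; funext i
    by_cases h : P i
    · simp only [mergeOn, Mb, hsymm, dif_pos h, if_pos (show w i ≠ mask from h)]
    · have hwi : w i = mask := not_not.mp h
      simp only [mergeOn, Mb, hsymm, dif_neg h, hwi, ne_eq, not_true_eq_false, if_false]
  have hMbsymm : ∀ (b : ∀ _i : {i // ¬ P i}, V), e.symm (aw, b) = Mb b := by
    intro b; funext i
    by_cases h : P i
    · simp only [Mb, aw, hsymm, dif_pos h]
    · simp only [Mb, aw, hsymm, dif_neg h]
  have hCprod : ∀ v : Fin L → V, (∏ i ∈ unmaskedSet mask w, D x i (v i))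
      = ∏ i : {i // P i}, D x (i : Fin L) (v i) := by
    intro v
    exact Finset.prod_subtype (unmaskedSet mask w) hmemP (fun i => D x i (v i))
  have honep : (∑ a : ∀ _i : {i // P i}, V, ∏ i : {i // P i}, D x (i : Fin L) (a i)) = 1 := by
    rw [← Fintype.piFinset_univ, ← Finset.prod_univ_sum]
    exact Finset.prod_eq_one fun i _ => hD1 x i.1
  -- compute FP2
  have hFP2 : FP2 D G2 mask k x w
      = ∑ b : ∀ _i : {i // ¬ P i}, V,
          (∏ i : {i // ¬ P i}, D x (i : Fin L) (b i)) * G2 k (Mb b) x (unmaskedSet mask w) := by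
    unfold FP2
    rw [← Equiv.sum_comp e.symm
      (fun z => (∏ j, D x j (z j)) * G2 k (mergeOn mask z w) x (unmaskedSet mask w))]
    rw [Fintype.sum_prod_type]
    have : ∀ (a : ∀ _i : {i // P i}, V) (b : ∀ _i : {i // ¬ P i}, V),
        (∏ j, D x j (e.symm (a, b) j)) * G2 k (mergeOn mask (e.symm (a, b)) w) x (unmaskedSet mask w)
        = ((∏ i : {i // P i}, D x (i : Fin L) (a i)) *
            ((∏ i : {i // ¬ P i}, D x (i : Fin L) (b i)) * G2 k (Mb b) x (unmaskedSet mask w))) := by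
      intro a b
      rw [hprod, hmerge]
      have h1 : ∀ i : {i // P i}, e.symm (a, b) (i : Fin L) = a i := by
        intro i; rw [hsymm]; exact dif_pos i.2
      have h2 : ∀ i : {i // ¬ P i}, e.symm (a, b) (i : Fin L) = b i := by
        intro i; rw [hsymm]; exact dif_neg i.2
      have e1 : (∏ i : {i // P i}, D x (i : Fin L) (e.symm (a, b) (i : Fin L)))
          = ∏ i : {i // P i}, D x (i : Fin L) (a i) :=
        Finset.prod_congr rfl (fun i _ => by rw [h1 i])
      have e2 : (∏ i : {i // ¬ P i}, D x (i : Fin L) (e.symm (a, b) (i : Fin L)))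
          = ∏ i : {i // ¬ P i}, D x (i : Fin L) (b i) :=
        Finset.prod_congr rfl (fun i _ => by rw [h2 i])
      rw [e1, e2]
      ring
    rw [Finset.sum_congr rfl (fun a _ => Finset.sum_congr rfl (fun b _ => this a b))]
    rw [← Finset.sum_mul_sum]
    rw [honep, one_mul]
  -- compute RHS
  have hRHS : ∑ z ∈ Finset.univ.filter
          (fun z : Fin L → V => ∀ i ∈ unmaskedSet mask w, z i = w i),
          (∏ j, D x j (z j)) * G2 k z x (unmaskedSet mask w)
      = (∏ i : {i // P i}, D x (i : Fin L) (w i)) *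
          ∑ b : ∀ _i : {i // ¬ P i}, V,
            (∏ i : {i // ¬ P i}, D x (i : Fin L) (b i)) * G2 k (Mb b) x (unmaskedSet mask w) := by
    rw [Finset.sum_filter]
    rw [← Equiv.sum_comp e.symm
      (fun z => if ∀ i ∈ unmaskedSet mask w, z i = w i then
        (∏ j, D x j (z j)) * G2 k z x (unmaskedSet mask w) else 0)]
    rw [Fintype.sum_prod_type]
    have hcond : ∀ (a : ∀ _i : {i // P i}, V) (b : ∀ _i : {i // ¬ P i}, V),
        (∀ i ∈ unmaskedSet mask w, e.symm (a, b) i = w i) ↔ a = aw := by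
      intro a b
      constructor
      · intro h; funext i
        have := h i.1 ((hmemP i.1).mpr i.2)
        rw [hsymm, dif_pos i.2] at this
        exact this
      · intro h; intro i hi
        have hPi : P i := (hmemP i).mp hi
        rw [hsymm, dif_pos hPi, h]
    have : ∀ (a : ∀ _i : {i // P i}, V) (b : ∀ _i : {i // ¬ P i}, V),
        (if ∀ i ∈ unmaskedSet mask w, e.symm (a, b) i = w i then
          (∏ j, D x j (e.symm (a, b) j)) * G2 k (e.symm (a, b)) x (unmaskedSet mask w) else 0)
        = (if a = aw then
            ((∏ i : {i // P i}, D x (i : Fin L) (w i)) *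
              ((∏ i : {i // ¬ P i}, D x (i : Fin L) (b i)) *
                G2 k (Mb b) x (unmaskedSet mask w))) else 0) := by
      intro a b
      rw [if_congr (hcond a b) rfl rfl]
      by_cases h : a = aw
      · rw [if_pos h, if_pos h, h, hMbsymm, hprod]
        have h1 : ∀ i : {i // P i}, Mb b (i : Fin L) = w i := by
          intro i; exact dif_pos i.2
        have h2 : ∀ i : {i // ¬ P i}, Mb b (i : Fin L) = b i := by
          intro i; exact dif_neg i.2
        have e1 : (∏ i : {i // P i}, D x (i : Fin L) (Mb b (i : Fin L)))
            = ∏ i : {i // P i}, D x (i : Fin L) (w (i : Fin L)) :=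
          Finset.prod_congr rfl (fun i _ => by rw [h1 i])
        have e2 : (∏ i : {i // ¬ P i}, D x (i : Fin L) (Mb b (i : Fin L)))
            = ∏ i : {i // ¬ P i}, D x (i : Fin L) (b i) :=
          Finset.prod_congr rfl (fun i _ => by rw [h2 i])
        rw [e1, e2]
        ring
      · rw [if_neg h, if_neg h]
    rw [Finset.sum_congr rfl (fun a _ => Finset.sum_congr rfl (fun b _ => this a b))]
    rw [Finset.sum_comm]
    simp only [Finset.sum_ite_eq' Finset.univ aw, Finset.mem_univ, if_true]
    rw [← Finset.mul_sum]
  rw [hFP2, hRHS, hCprod w]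

variable {D : (Fin L → V) → Fin L → V → ℝ}
variable {G2 : ℕ → (Fin L → V) → (Fin L → V) → Finset (Fin L) → ℝ}

lemma p2Kernel_nonneg (hD0 : ∀ x i y, 0 ≤ D x i y)
    (hG20 : ∀ k z x S, 0 ≤ G2 k z x S) (mask : V) (k : ℕ) (x w : Fin L → V) :
    0 ≤ p2Kernel D G2 mask k x w := by
  apply Finset.sum_nonneg
  intro z _
  apply mul_nonneg (Finset.prod_nonneg fun j _ => hD0 x j (z j))
  exact Finset.sum_nonneg fun S _ => hG20 _ _ _ _

lemma FP2_nonneg (hD0 : ∀ x i y, 0 ≤ D x i y)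
    (hG20 : ∀ k z x S, 0 ≤ G2 k z x S) (mask : V) (k : ℕ) (x w : Fin L → V) :
    0 ≤ FP2 D G2 mask k x w :=
  Finset.sum_nonneg fun z _ =>
    mul_nonneg (Finset.prod_nonneg fun j _ => hD0 x j (z j)) (hG20 _ _ _ _)

lemma refDistP2_nonneg (hG20 : ∀ k z x S, 0 ≤ G2 k z x S)
    (mask : V) (x0 : Fin L → V) : ∀ k x, 0 ≤ refDistP2 G2 mask x0 k x := by
  intro k
  induction k with
  | zero => intro x; unfold refDistP2; split <;> norm_num
  | succ k ih =>
      intro x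
      unfold refDistP2
      split
      · exact Finset.sum_nonneg fun y _ => mul_nonneg (ih y) (hG20 _ _ _ _)
      · exact le_rfl

/-- Backward success probability. -/
noncomputable def Bb (D : (Fin L → V) → Fin L → V → ℝ)
    (G2 : ℕ → (Fin L → V) → (Fin L → V) → Finset (Fin L) → ℝ)
    (mask : V) (x0 : Fin L → V) : ℕ → (Fin L → V) → ℝ
  | 0, x => if x = x0 then 1 else 0
  | (j+1), x => ∑ w : Fin L → V,
      p2Kernel D G2 mask (L - (j+1)) x w * Bb D G2 mask x0 j w

lemma Bb_nonneg (hD0 : ∀ x i y, 0 ≤ D x i y)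
    (hG20 : ∀ k z x S, 0 ≤ G2 k z x S) (mask : V) (x0 : Fin L → V) :
    ∀ j x, 0 ≤ Bb D G2 mask x0 j x := by
  intro j
  induction j with
  | zero => intro x; unfold Bb; split <;> norm_num
  | succ j ih =>
      intro x
      unfold Bb
      exact Finset.sum_nonneg fun w _ =>
        mul_nonneg (p2Kernel_nonneg hD0 hG20 mask _ x w) (ih w)

lemma p2Dist_eq_Bb (mask : V) (x0 : Fin L → V) :
    ∀ j, j ≤ L → p2Dist D G2 mask L x0
      = ∑ x : Fin L → V, p2Dist D G2 mask (L - j) x * Bb D G2 mask x0 j x := by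
  intro j
  induction j with
  | zero =>
      intro _
      simp [Bb, mul_ite, mul_one, mul_zero]
  | succ j ih =>
      intro hj
      rw [ih (by omega)]
      have hLj : L - j = (L - (j+1)) + 1 := by omega
      rw [hLj]
      have : ∀ x : Fin L → V, p2Dist D G2 mask ((L - (j+1)) + 1) x
          = ∑ y : Fin L → V, p2Dist D G2 mask (L - (j+1)) y
              * p2Kernel D G2 mask (L - (j+1)) y x := fun x => rfl
      rw [Finset.sum_congr rfl fun x _ => by rw [this x]]
      rw [Finset.sum_congr rfl fun x _ => Finset.sum_mul _ _ _]
      rw [Finset.sum_comm]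
      apply Finset.sum_congr rfl
      intro y _
      have hBb : Bb D G2 mask x0 (j+1) y = ∑ w : Fin L → V,
          p2Kernel D G2 mask (L - (j+1)) y w * Bb D G2 mask x0 j w := rfl
      rw [hBb, Finset.mul_sum]
      apply Finset.sum_congr rfl
      intro x _
      ring

lemma kernel_lb (hD0 : ∀ x i y, 0 ≤ D x i y) (hD1 : ∀ x i, ∑ y, D x i y = 1)
    (hG20 : ∀ k z x S, 0 ≤ G2 k z x S) (mask : V) (k : ℕ) (x w : Fin L → V) :
    (∏ i ∈ unmaskedSet mask w, D x i (w i)) * FP2 D G2 mask (k+1) x w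
      ≤ p2Kernel D G2 mask k x w := by
  rw [fp2_split D hD1 G2 mask (k+1) x w]
  unfold p2Kernel
  rw [Finset.sum_filter]
  apply Finset.sum_le_sum
  intro z _
  by_cases h : ∀ i ∈ unmaskedSet mask w, z i = w i
  · rw [if_pos h]
    apply mul_le_mul_of_nonneg_left ?_ (Finset.prod_nonneg fun j _ => hD0 x j (z j))
    apply Finset.single_le_sum (f := fun S => G2 (k+1) z x S)
      (fun S _ => hG20 _ _ _ _)
    apply Finset.mem_filter.mpr
    refine ⟨Finset.mem_univ _, ?_⟩
    funext i
    unfold maskedWith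
    by_cases hi : i ∈ unmaskedSet mask w
    · rw [if_pos hi]; exact h i hi
    · rw [if_neg hi]
      rw [mem_unmaskedSet, not_not] at hi
      exact hi.symm
  · rw [if_neg h]
    apply mul_nonneg (Finset.prod_nonneg fun j _ => hD0 x j (z j))
    exact Finset.sum_nonneg fun S _ => hG20 _ _ _ _

lemma XSet_zero' {mask : V} {x0 : Fin L → V} {w : Fin L → V}
    (hw : w ∈ XSet mask x0 0) : w = x0 := by
  funext i
  rcases (Finset.mem_filter.mp hw).2.1 i with h | h
  · exact h
  · exfalso
    have h2 := (Finset.mem_filter.mp hw).2.2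
    unfold NMask at h2
    rw [Finset.card_eq_zero] at h2
    have hmem : i ∈ Finset.univ.filter (fun i : Fin L => w i = mask) :=
      Finset.mem_filter.mpr ⟨Finset.mem_univ _, h⟩
    rw [h2] at hmem
    exact absurd hmem (Finset.notMem_empty i)

lemma refDistP2_L_support {mask : V} {x0 : Fin L → V} {x : Fin L → V}
    (hx : refDistP2 G2 mask x0 L x ≠ 0) : x = x0 := by
  by_cases hL : L = 0
  · subst hL
    funext i
    exact i.elim0
  · obtain ⟨m, rfl⟩ : ∃ m, L = m + 1 := ⟨L - 1, by omega⟩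
    have heq : refDistP2 G2 mask x0 (m+1) x
        = if x ∈ XSet mask x0 ((m+1) - (m+1)) then
            ∑ y : Fin (m+1) → V, refDistP2 G2 mask x0 m y * G2 (m+1) x0 y (unmaskedSet mask x)
          else 0 := rfl
    rw [heq] at hx
    by_cases hmem : x ∈ XSet mask x0 ((m+1) - (m+1))
    · rw [Nat.sub_self] at hmem
      exact XSet_zero' hmem
    · rw [if_neg hmem] at hx
      exact absurd rfl hx

lemma refDistP2_succ {mask : V} {x0 : Fin L → V} (n : ℕ) (w : Fin L → V) :
    refDistP2 G2 mask x0 (n+1) w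
      = if w ∈ XSet mask x0 (L - (n+1)) then
          ∑ y : Fin L → V, refDistP2 G2 mask x0 n y * G2 (n+1) x0 y (unmaskedSet mask w)
        else 0 := rfl

lemma refDistP2_succ_pos {mask : V} {x0 : Fin L → V}
    (hG20 : ∀ k z x S, 0 ≤ G2 k z x S)
    {n : ℕ} {x w : Fin L → V}
    (hrpos : 0 < refDistP2 G2 mask x0 n x)
    (hw : w ∈ XSet mask x0 (L - n - 1))
    (hq : 0 < G2 (n+1) x0 x (unmaskedSet mask w)) :
    0 < refDistP2 G2 mask x0 (n+1) w := by
  have hmem : w ∈ XSet mask x0 (L - (n+1)) := by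
    have h : L - (n+1) = L - n - 1 := by omega
    rw [h]; exact hw
  rw [refDistP2_succ, if_pos hmem]
  apply Finset.sum_pos'
  · intro y _
    exact mul_nonneg (refDistP2_nonneg hG20 _ _ n y) (hG20 _ _ _ _)
  · exact ⟨x, Finset.mem_univ x, mul_pos hrpos hq⟩

lemma kernel_pos {mask : V} {x0 : Fin L → V}
    (hD0 : ∀ x i y, 0 ≤ D x i y) (hD1 : ∀ x i, ∑ y, D x i y = 1)
    (hG20 : ∀ k z x S, 0 ≤ G2 k z x S)
    {n : ℕ} {x w : Fin L → V}
    (hw : w ∈ XSet mask x0 (L - n - 1))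
    (hDp : ∀ i ∈ unmaskedSet mask w, 0 < D x i (x0 i))
    (hFp : 0 < FP2 D G2 mask (n + 1) x w) :
    0 < p2Kernel D G2 mask n x w := by
  have hpe : (∏ i ∈ unmaskedSet mask w, D x i (x0 i))
      = ∏ i ∈ unmaskedSet mask w, D x i (w i) :=
    Finset.prod_congr rfl (fun i hi => by rw [XSet_val hw hi])
  have hprodpos : 0 < ∏ i ∈ unmaskedSet mask w, D x i (x0 i) :=
    Finset.prod_pos hDp
  calc (0:ℝ) < (∏ i ∈ unmaskedSet mask w, D x i (x0 i)) * FP2 D G2 mask (n+1) x w :=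
        mul_pos hprodpos hFp
    _ = (∏ i ∈ unmaskedSet mask w, D x i (w i)) * FP2 D G2 mask (n+1) x w := by rw [hpe]
    _ ≤ p2Kernel D G2 mask n x w := kernel_lb hD0 hD1 hG20 mask n x w

lemma Bb_pos {mask : V} {x0 : Fin L → V}
    (hD0 : ∀ x i y, 0 ≤ D x i y) (hD1 : ∀ x i, ∑ y, D x i y = 1)
    (hG20 : ∀ k z x S, 0 ≤ G2 k z x S)
    (hG2card : ∀ k z x S, G2 k z x S ≠ 0 → S.card = k)
    (hG2sum : ∀ k z x, 1 ≤ k → k ≤ L → ∑ S : Finset (Fin L), G2 k z x S = 1)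
    (hx0 : ∀ i, x0 i ≠ mask)
    (hpos : ∀ k, k < L → ∀ x : Fin L → V, 0 < refDistP2 G2 mask x0 k x →
      ∀ y ∈ XSet mask x0 (L - k - 1), 0 < G2 (k + 1) x0 x (unmaskedSet mask y) →
        (∀ i ∈ unmaskedSet mask y, 0 < D x i (x0 i)) ∧
          0 < FP2 D G2 mask (k + 1) x y) :
    ∀ j, j ≤ L → ∀ x, refDistP2 G2 mask x0 (L - j) x ≠ 0 →
      0 < Bb D G2 mask x0 j x := by
  intro j
  induction j with
  | zero =>
      intro _ x hx
      rw [Nat.sub_zero] at hx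
      have hxx : x = x0 := refDistP2_L_support hx
      have h1 : Bb D G2 mask x0 0 x = if x = x0 then 1 else 0 := rfl
      rw [h1, if_pos hxx]
      norm_num
  | succ j ih =>
      intro hj x hx
      have hnL : L - (j+1) < L := by omega
      have hrpos : 0 < refDistP2 G2 mask x0 (L - (j+1)) x :=
        lt_of_le_of_ne (refDistP2_nonneg hG20 mask x0 _ x) (Ne.symm hx)
      have hq1 := sum_G2_XSet hG2card hG2sum hx0 hnL x
      obtain ⟨w, hw, hqne⟩ : ∃ w ∈ XSet mask x0 (L - (L - (j+1)) - 1),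
          G2 (L - (j+1) + 1) x0 x (unmaskedSet mask w) ≠ 0 := by
        by_contra h
        push_neg at h
        rw [Finset.sum_eq_zero h] at hq1
        norm_num at hq1
      have hq : 0 < G2 (L - (j+1) + 1) x0 x (unmaskedSet mask w) :=
        lt_of_le_of_ne (hG20 _ _ _ _) (Ne.symm hqne)
      obtain ⟨hDp, hFp⟩ := hpos (L - (j+1)) hnL x hrpos w hw hq
      have hker : 0 < p2Kernel D G2 mask (L - (j+1)) x w :=
        kernel_pos hD0 hD1 hG20 hw hDp hFp
      have hrpos2 : 0 < refDistP2 G2 mask x0 (L - (j+1) + 1) w :=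
        refDistP2_succ_pos hG20 hrpos hw hq
      have hnj : L - (j+1) + 1 = L - j := by omega
      have hBbw : 0 < Bb D G2 mask x0 j w := by
        apply ih (by omega) w
        rw [← hnj]
        exact hrpos2.ne'
      have hBb : Bb D G2 mask x0 (j+1) x = ∑ w' : Fin L → V,
          p2Kernel D G2 mask (L - (j+1)) x w' * Bb D G2 mask x0 j w' := rfl
      rw [hBb]
      apply Finset.sum_pos'
      · intro y _
        exact mul_nonneg (p2Kernel_nonneg hD0 hG20 mask _ x y)
          (Bb_nonneg hD0 hG20 mask x0 j y)
      · exact ⟨w, Finset.mem_univ w, mul_pos hker hBbw⟩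

/-- Per-step ELBO contribution. -/
noncomputable def elboT (D : (Fin L → V) → Fin L → V → ℝ)
    (G2 : ℕ → (Fin L → V) → (Fin L → V) → Finset (Fin L) → ℝ)
    (mask : V) (x0 : Fin L → V) (k : ℕ) : ℝ :=
  ∑ x : Fin L → V, refDistP2 G2 mask x0 k x *
    ∑ w ∈ XSet mask x0 (L - k - 1),
      G2 (k + 1) x0 x (unmaskedSet mask w) *
        ((∑ i ∈ unmaskedSet mask w, Real.log (D x i (x0 i)))
          + (Real.log (FP2 D G2 mask (k + 1) x w)
            - Real.log (G2 (k + 1) x0 x (unmaskedSet mask w))))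

lemma elbo_chain {mask : V} {x0 : Fin L → V}
    (hD0 : ∀ x i y, 0 ≤ D x i y) (hD1 : ∀ x i, ∑ y, D x i y = 1)
    (hG20 : ∀ k z x S, 0 ≤ G2 k z x S)
    (hG2card : ∀ k z x S, G2 k z x S ≠ 0 → S.card = k)
    (hG2sum : ∀ k z x, 1 ≤ k → k ≤ L → ∑ S : Finset (Fin L), G2 k z x S = 1)
    (hx0 : ∀ i, x0 i ≠ mask)
    (hpos : ∀ k, k < L → ∀ x : Fin L → V, 0 < refDistP2 G2 mask x0 k x →
      ∀ y ∈ XSet mask x0 (L - k - 1), 0 < G2 (k + 1) x0 x (unmaskedSet mask y) →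
        (∀ i ∈ unmaskedSet mask y, 0 < D x i (x0 i)) ∧
          0 < FP2 D G2 mask (k + 1) x y) :
    ∀ j, j ≤ L → ∑ k ∈ Finset.Ico (L - j) L, elboT D G2 mask x0 k
      ≤ ∑ x : Fin L → V, refDistP2 G2 mask x0 (L - j) x *
          Real.log (Bb D G2 mask x0 j x) := by
  intro j
  induction j with
  | zero =>
      intro _
      rw [Nat.sub_zero, Finset.Ico_self, Finset.sum_empty]
      have hz : ∑ x : Fin L → V, refDistP2 G2 mask x0 L x *
          Real.log (Bb D G2 mask x0 0 x) = 0 := by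
        apply Finset.sum_eq_zero
        intro x _
        by_cases h : refDistP2 G2 mask x0 L x = 0
        · rw [h, zero_mul]
        · have hxx : x = x0 := refDistP2_L_support h
          have h1 : Bb D G2 mask x0 0 x = if x = x0 then 1 else 0 := rfl
          rw [h1, if_pos hxx, Real.log_one, mul_zero]
      rw [hz]
  | succ j ih =>
      intro hj
      have hnL : L - (j+1) < L := by omega
      have hnj : L - (j+1) + 1 = L - j := by omega
      rw [Finset.sum_eq_sum_Ico_succ_bot hnL]
      have hIH : ∑ k ∈ Finset.Ico (L - (j+1) + 1) L, elboT D G2 mask x0 k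
          ≤ ∑ w : Fin L → V, refDistP2 G2 mask x0 (L - (j+1) + 1) w *
              Real.log (Bb D G2 mask x0 j w) := by
        rw [hnj]; exact ih (by omega)
      have hswap : ∑ w : Fin L → V, refDistP2 G2 mask x0 (L - (j+1) + 1) w *
            Real.log (Bb D G2 mask x0 j w)
          = ∑ x : Fin L → V, refDistP2 G2 mask x0 (L - (j+1)) x *
              ∑ w ∈ XSet mask x0 (L - (L - (j+1)) - 1),
                G2 (L - (j+1) + 1) x0 x (unmaskedSet mask w) *
                  Real.log (Bb D G2 mask x0 j w) := by
        have hind : L - (L - (j+1) + 1) = L - (L - (j+1)) - 1 := by omega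
        simp only [refDistP2_succ, hind, ite_mul, zero_mul]
        rw [Fintype.sum_ite_mem]
        rw [Finset.sum_congr rfl (fun w _ => Finset.sum_mul _ _ _)]
        rw [Finset.sum_comm]
        apply Finset.sum_congr rfl
        intro y _
        rw [Finset.mul_sum]
        exact Finset.sum_congr rfl (fun w _ => by ring)
      have hcomb : elboT D G2 mask x0 (L - (j+1))
            + ∑ x : Fin L → V, refDistP2 G2 mask x0 (L - (j+1)) x *
                ∑ w ∈ XSet mask x0 (L - (L - (j+1)) - 1),
                  G2 (L - (j+1) + 1) x0 x (unmaskedSet mask w) *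
                    Real.log (Bb D G2 mask x0 j w)
          = ∑ x : Fin L → V, refDistP2 G2 mask x0 (L - (j+1)) x *
              ∑ w ∈ XSet mask x0 (L - (L - (j+1)) - 1),
                G2 (L - (j+1) + 1) x0 x (unmaskedSet mask w) *
                  (((∑ i ∈ unmaskedSet mask w, Real.log (D x i (x0 i)))
                    + (Real.log (FP2 D G2 mask (L - (j+1) + 1) x w)
                      - Real.log (G2 (L - (j+1) + 1) x0 x (unmaskedSet mask w))))
                   + Real.log (Bb D G2 mask x0 j w)) := by
        unfold elboT
        rw [← Finset.sum_add_distrib]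
        apply Finset.sum_congr rfl
        intro x _
        rw [← mul_add, ← Finset.sum_add_distrib]
        congr 1
        apply Finset.sum_congr rfl
        intro w _
        ring
      have hpoint : ∀ x : Fin L → V,
          refDistP2 G2 mask x0 (L - (j+1)) x *
            (∑ w ∈ XSet mask x0 (L - (L - (j+1)) - 1),
              G2 (L - (j+1) + 1) x0 x (unmaskedSet mask w) *
                (((∑ i ∈ unmaskedSet mask w, Real.log (D x i (x0 i)))
                  + (Real.log (FP2 D G2 mask (L - (j+1) + 1) x w)
                    - Real.log (G2 (L - (j+1) + 1) x0 x (unmaskedSet mask w))))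
                 + Real.log (Bb D G2 mask x0 j w)))
          ≤ refDistP2 G2 mask x0 (L - (j+1)) x *
              Real.log (Bb D G2 mask x0 (j+1) x) := by
        intro x
        by_cases hr : refDistP2 G2 mask x0 (L - (j+1)) x = 0
        · rw [hr, zero_mul, zero_mul]
        have hrpos : 0 < refDistP2 G2 mask x0 (L - (j+1)) x :=
          lt_of_le_of_ne (refDistP2_nonneg hG20 mask x0 _ x) (Ne.symm hr)
        apply mul_le_mul_of_nonneg_left ?_ hrpos.le
        have hq1 := sum_G2_XSet hG2card hG2sum hx0 hnL x
        -- positivity data for each w with positive planner weight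
        have hdata : ∀ w ∈ XSet mask x0 (L - (L - (j+1)) - 1),
            0 < G2 (L - (j+1) + 1) x0 x (unmaskedSet mask w) →
            (∀ i ∈ unmaskedSet mask w, 0 < D x i (x0 i)) ∧
              0 < FP2 D G2 mask (L - (j+1) + 1) x w ∧
              0 < p2Kernel D G2 mask (L - (j+1)) x w ∧
              0 < Bb D G2 mask x0 j w := by
          intro w hw hq
          obtain ⟨hDp, hFp⟩ := hpos (L - (j+1)) hnL x hrpos w hw hq
          refine ⟨hDp, hFp, kernel_pos hD0 hD1 hG20 hw hDp hFp, ?_⟩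
          apply Bb_pos hD0 hD1 hG20 hG2card hG2sum hx0 hpos j (by omega) w
          rw [← hnj]
          exact (refDistP2_succ_pos hG20 hrpos hw hq).ne'
        have hterm : ∀ w ∈ XSet mask x0 (L - (L - (j+1)) - 1),
            G2 (L - (j+1) + 1) x0 x (unmaskedSet mask w) *
              (((∑ i ∈ unmaskedSet mask w, Real.log (D x i (x0 i)))
                + (Real.log (FP2 D G2 mask (L - (j+1) + 1) x w)
                  - Real.log (G2 (L - (j+1) + 1) x0 x (unmaskedSet mask w))))
               + Real.log (Bb D G2 mask x0 j w))
            ≤ G2 (L - (j+1) + 1) x0 x (unmaskedSet mask w) *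
                (Real.log (p2Kernel D G2 mask (L - (j+1)) x w * Bb D G2 mask x0 j w)
                  - Real.log (G2 (L - (j+1) + 1) x0 x (unmaskedSet mask w))) := by
          intro w hw
          by_cases hq : G2 (L - (j+1) + 1) x0 x (unmaskedSet mask w) = 0
          · rw [hq, zero_mul, zero_mul]
          have hqpos : 0 < G2 (L - (j+1) + 1) x0 x (unmaskedSet mask w) :=
            lt_of_le_of_ne (hG20 _ _ _ _) (Ne.symm hq)
          obtain ⟨hDp, hFp, hKp, hBp⟩ := hdata w hw hqpos
          apply mul_le_mul_of_nonneg_left ?_ hqpos.le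
          have hlogKB : Real.log (p2Kernel D G2 mask (L - (j+1)) x w * Bb D G2 mask x0 j w)
              = Real.log (p2Kernel D G2 mask (L - (j+1)) x w)
                + Real.log (Bb D G2 mask x0 j w) := Real.log_mul hKp.ne' hBp.ne'
          have hsumlog : ∑ i ∈ unmaskedSet mask w, Real.log (D x i (x0 i))
              = Real.log (∏ i ∈ unmaskedSet mask w, D x i (x0 i)) :=
            (Real.log_prod (fun i hi => (hDp i hi).ne')).symm
          have hprodpos : 0 < ∏ i ∈ unmaskedSet mask w, D x i (x0 i) :=
            Finset.prod_pos hDp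
          have hklb : (∏ i ∈ unmaskedSet mask w, D x i (x0 i))
                * FP2 D G2 mask (L - (j+1) + 1) x w
              ≤ p2Kernel D G2 mask (L - (j+1)) x w := by
            have hpe : (∏ i ∈ unmaskedSet mask w, D x i (x0 i))
                = ∏ i ∈ unmaskedSet mask w, D x i (w i) :=
              Finset.prod_congr rfl (fun i hi => by rw [XSet_val hw hi])
            rw [hpe]
            exact kernel_lb hD0 hD1 hG20 mask _ x w
          have hlog2 : Real.log (∏ i ∈ unmaskedSet mask w, D x i (x0 i))
                + Real.log (FP2 D G2 mask (L - (j+1) + 1) x w)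
              ≤ Real.log (p2Kernel D G2 mask (L - (j+1)) x w) := by
            rw [← Real.log_mul hprodpos.ne' hFp.ne']
            exact Real.log_le_log (mul_pos hprodpos hFp) hklb
          rw [hlogKB, hsumlog]
          linarith
        have hSpos : 0 < ∑ w ∈ XSet mask x0 (L - (L - (j+1)) - 1),
            p2Kernel D G2 mask (L - (j+1)) x w * Bb D G2 mask x0 j w := by
          obtain ⟨w, hw, hqne⟩ : ∃ w ∈ XSet mask x0 (L - (L - (j+1)) - 1),
              G2 (L - (j+1) + 1) x0 x (unmaskedSet mask w) ≠ 0 := by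
            by_contra h
            push_neg at h
            rw [Finset.sum_eq_zero h] at hq1
            norm_num at hq1
          have hqpos := lt_of_le_of_ne (hG20 _ _ _ _) (Ne.symm hqne)
          obtain ⟨_, _, hKp, hBp⟩ := hdata w hw hqpos
          apply Finset.sum_pos'
          · intro y _
            exact mul_nonneg (p2Kernel_nonneg hD0 hG20 mask _ x y)
              (Bb_nonneg hD0 hG20 mask x0 j y)
          · exact ⟨w, hw, mul_pos hKp hBp⟩
        calc ∑ w ∈ XSet mask x0 (L - (L - (j+1)) - 1),
              G2 (L - (j+1) + 1) x0 x (unmaskedSet mask w) *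
                (((∑ i ∈ unmaskedSet mask w, Real.log (D x i (x0 i)))
                  + (Real.log (FP2 D G2 mask (L - (j+1) + 1) x w)
                    - Real.log (G2 (L - (j+1) + 1) x0 x (unmaskedSet mask w))))
                 + Real.log (Bb D G2 mask x0 j w))
            ≤ ∑ w ∈ XSet mask x0 (L - (L - (j+1)) - 1),
                G2 (L - (j+1) + 1) x0 x (unmaskedSet mask w) *
                  (Real.log (p2Kernel D G2 mask (L - (j+1)) x w * Bb D G2 mask x0 j w)
                    - Real.log (G2 (L - (j+1) + 1) x0 x (unmaskedSet mask w))) :=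
              Finset.sum_le_sum hterm
          _ ≤ Real.log (∑ w ∈ XSet mask x0 (L - (L - (j+1)) - 1),
                p2Kernel D G2 mask (L - (j+1)) x w * Bb D G2 mask x0 j w) := by
              apply logsum_aux
              · intro w _; exact hG20 _ _ _ _
              · exact hq1
              · intro w _
                exact mul_nonneg (p2Kernel_nonneg hD0 hG20 mask _ x w)
                  (Bb_nonneg hD0 hG20 mask x0 j w)
              · intro w hw hq
                obtain ⟨_, _, hKp, hBp⟩ := hdata w hw hq
                exact mul_pos hKp hBp
          _ ≤ Real.log (Bb D G2 mask x0 (j+1) x) := by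
              have hBb : Bb D G2 mask x0 (j+1) x = ∑ w : Fin L → V,
                  p2Kernel D G2 mask (L - (j+1)) x w * Bb D G2 mask x0 j w := rfl
              rw [hBb]
              apply Real.log_le_log hSpos
              apply Finset.sum_le_sum_of_subset_of_nonneg (Finset.subset_univ _)
              intro w _ _
              exact mul_nonneg (p2Kernel_nonneg hD0 hG20 mask _ x w)
                (Bb_nonneg hD0 hG20 mask x0 j w)
      calc elboT D G2 mask x0 (L - (j+1))
            + ∑ k ∈ Finset.Ico (L - (j+1) + 1) L, elboT D G2 mask x0 k
          ≤ elboT D G2 mask x0 (L - (j+1))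
            + ∑ w : Fin L → V, refDistP2 G2 mask x0 (L - (j+1) + 1) w *
                Real.log (Bb D G2 mask x0 j w) := by linarith
        _ = ∑ x : Fin L → V, refDistP2 G2 mask x0 (L - (j+1)) x *
              ∑ w ∈ XSet mask x0 (L - (L - (j+1)) - 1),
                G2 (L - (j+1) + 1) x0 x (unmaskedSet mask w) *
                  (((∑ i ∈ unmaskedSet mask w, Real.log (D x i (x0 i)))
                    + (Real.log (FP2 D G2 mask (L - (j+1) + 1) x w)
                      - Real.log (G2 (L - (j+1) + 1) x0 x (unmaskedSet mask w))))
                   + Real.log (Bb D G2 mask x0 j w)) := by rw [hswap]; exact hcomb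
        _ ≤ ∑ x : Fin L → V, refDistP2 G2 mask x0 (L - (j+1)) x *
              Real.log (Bb D G2 mask x0 (j+1) x) :=
            Finset.sum_le_sum (fun x _ => hpoint x)

end AuxP2
/-- **Planner-aware ELBO for P2-style planners.**
`log p^{G₂}(x₀) ≥ 𝓔₁(x₀) + 𝓔₂(x₀)` where
`𝓔₁(x₀) = Σ_{k=0}^{L-1} E_{x_k ~ r^{G₂}_k}[Σ_{y ∈ 𝓧_{L-k-1}(x₀)} Cat(C(y); G₂^{k+1}(x₀,x_k)) Σ_{i ∈ C(y)} log Cat(x₀^i; D^i(x_k))]`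
and
`𝓔₂(x₀) = −Σ_{k=0}^{L-1} E_{x_k ~ r^{G₂}_k}[Σ_{y ∈ 𝓧_{L-k-1}(x₀)} Cat(C(y); G₂^{k+1}(x₀,x_k)) log(Cat(C(y); G₂^{k+1}(x₀,x_k)) / F^{k+1}(x_k, y))]`.
The positivity hypothesis `hpos` ensures no `−∞` terms occur, so the extended-real
inequality can be stated over `ℝ`. -/
theorem p2_planner_aware_elbo
    {V : Type*} [Fintype V] [DecidableEq V] {L : ℕ}
    (mask : V)
    (D : (Fin L → V) → Fin L → V → ℝ)
    (hD0 : ∀ x i y, 0 ≤ D x i y) (hD1 : ∀ x i, ∑ y, D x i y = 1)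
    (G2 : ℕ → (Fin L → V) → (Fin L → V) → Finset (Fin L) → ℝ)
    (hG20 : ∀ k z x S, 0 ≤ G2 k z x S)
    (hG2card : ∀ k z x S, G2 k z x S ≠ 0 → S.card = k)
    (hG2sum : ∀ k z x, 1 ≤ k → k ≤ L → ∑ S : Finset (Fin L), G2 k z x S = 1)
    (x0 : Fin L → V) (hx0 : ∀ i, x0 i ≠ mask)
    (hpos : ∀ k, k < L → ∀ x : Fin L → V, 0 < refDistP2 G2 mask x0 k x →
      ∀ y ∈ XSet mask x0 (L - k - 1), 0 < G2 (k + 1) x0 x (unmaskedSet mask y) →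
        (∀ i ∈ unmaskedSet mask y, 0 < D x i (x0 i)) ∧
          0 < FP2 D G2 mask (k + 1) x y) :
    Real.log (p2Dist D G2 mask L x0)
      ≥ (∑ k ∈ Finset.range L, ∑ x : Fin L → V, refDistP2 G2 mask x0 k x *
           ∑ y ∈ XSet mask x0 (L - k - 1),
             G2 (k + 1) x0 x (unmaskedSet mask y) *
               ∑ i ∈ unmaskedSet mask y, Real.log (D x i (x0 i)))
        + -(∑ k ∈ Finset.range L, ∑ x : Fin L → V, refDistP2 G2 mask x0 k x *
             ∑ y ∈ XSet mask x0 (L - k - 1),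
               G2 (k + 1) x0 x (unmaskedSet mask y) *
                 Real.log (G2 (k + 1) x0 x (unmaskedSet mask y) /
                   FP2 D G2 mask (k + 1) x y)) := by
  classical
  have hfull : p2Dist D G2 mask L x0 = Bb D G2 mask x0 L (fun _ => mask) := by
    rw [p2Dist_eq_Bb mask x0 L le_rfl]
    have h0 : ∀ x : Fin L → V, p2Dist D G2 mask (L - L) x
        = if x = (fun _ => mask) then (1:ℝ) else 0 := by
      intro x; rw [Nat.sub_self]; rfl
    rw [Finset.sum_congr rfl (fun x _ => by rw [h0 x])]
    simp
  have hchain := elbo_chain hD0 hD1 hG20 hG2card hG2sum hx0 hpos L le_rfl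
  rw [Nat.sub_self] at hchain
  have hr0 : ∀ x : Fin L → V,
      refDistP2 G2 mask x0 0 x = if x = (fun _ => mask) then (1:ℝ) else 0 :=
    fun x => rfl
  have hstart : ∑ x : Fin L → V, refDistP2 G2 mask x0 0 x *
        Real.log (Bb D G2 mask x0 L x)
      = Real.log (Bb D G2 mask x0 L (fun _ => mask)) := by
    rw [Finset.sum_congr rfl (fun x _ => by rw [hr0 x])]
    simp
  rw [hstart] at hchain
  have hRHS : ∀ k ∈ Finset.range L,
      (∑ x : Fin L → V, refDistP2 G2 mask x0 k x *
           ∑ y ∈ XSet mask x0 (L - k - 1),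
             G2 (k + 1) x0 x (unmaskedSet mask y) *
               ∑ i ∈ unmaskedSet mask y, Real.log (D x i (x0 i)))
        - (∑ x : Fin L → V, refDistP2 G2 mask x0 k x *
             ∑ y ∈ XSet mask x0 (L - k - 1),
               G2 (k + 1) x0 x (unmaskedSet mask y) *
                 Real.log (G2 (k + 1) x0 x (unmaskedSet mask y) /
                   FP2 D G2 mask (k + 1) x y))
      = elboT D G2 mask x0 k := by
    intro k hk
    have hkL : k < L := Finset.mem_range.mp hk
    unfold elboT
    rw [← Finset.sum_sub_distrib]
    apply Finset.sum_congr rfl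
    intro x _
    by_cases hr : refDistP2 G2 mask x0 k x = 0
    · rw [hr]; ring
    have hrpos : 0 < refDistP2 G2 mask x0 k x :=
      lt_of_le_of_ne (refDistP2_nonneg hG20 mask x0 k x) (Ne.symm hr)
    rw [← mul_sub]
    congr 1
    rw [← Finset.sum_sub_distrib]
    apply Finset.sum_congr rfl
    intro w hw
    by_cases hq : G2 (k + 1) x0 x (unmaskedSet mask w) = 0
    · rw [hq]; ring
    have hqpos : 0 < G2 (k + 1) x0 x (unmaskedSet mask w) :=
      lt_of_le_of_ne (hG20 _ _ _ _) (Ne.symm hq)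
    obtain ⟨hDp, hFp⟩ := hpos k hkL x hrpos w hw hqpos
    rw [Real.log_div hq hFp.ne']
    ring
  rw [ge_iff_le, hfull]
  calc (∑ k ∈ Finset.range L, ∑ x : Fin L → V, refDistP2 G2 mask x0 k x *
           ∑ y ∈ XSet mask x0 (L - k - 1),
             G2 (k + 1) x0 x (unmaskedSet mask y) *
               ∑ i ∈ unmaskedSet mask y, Real.log (D x i (x0 i)))
        + -(∑ k ∈ Finset.range L, ∑ x : Fin L → V, refDistP2 G2 mask x0 k x *
             ∑ y ∈ XSet mask x0 (L - k - 1),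
               G2 (k + 1) x0 x (unmaskedSet mask y) *
                 Real.log (G2 (k + 1) x0 x (unmaskedSet mask y) /
                   FP2 D G2 mask (k + 1) x y))
      = ∑ k ∈ Finset.range L,
          ((∑ x : Fin L → V, refDistP2 G2 mask x0 k x *
             ∑ y ∈ XSet mask x0 (L - k - 1),
               G2 (k + 1) x0 x (unmaskedSet mask y) *
                 ∑ i ∈ unmaskedSet mask y, Real.log (D x i (x0 i)))
           - (∑ x : Fin L → V, refDistP2 G2 mask x0 k x *
             ∑ y ∈ XSet mask x0 (L - k - 1),
               G2 (k + 1) x0 x (unmaskedSet mask y) *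
                 Real.log (G2 (k + 1) x0 x (unmaskedSet mask y) /
                   FP2 D G2 mask (k + 1) x y))) := by
        rw [Finset.sum_sub_distrib]; ring
    _ = ∑ k ∈ Finset.range L, elboT D G2 mask x0 k :=
        Finset.sum_congr rfl hRHS
    _ = ∑ k ∈ Finset.Ico 0 L, elboT D G2 mask x0 k := by
        rw [Finset.range_eq_Ico]
    _ ≤ Real.log (Bb D G2 mask x0 L (fun _ => mask)) := hchain
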